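/- Let f be a probability density supported on [-1,1], let p(x,t) = (\varphi_t * f)(x) and s(x,t) = \partial_x \log p(x,t). Then for all x \in R and all t > 0, s(x,t)^2 \le (2/t) \log(1/(\sqrt{2\pi t} \cdot p(x,t))). -/

import Mathlib

open MeasureTheory Real

/-- Density of `N(0,t)`. -/
noncomputable def gaussDensity (t x : ℝ) : ℝ :=
  (Real.sqrt (2 * Real.pi * t))⁻¹ * Real.exp (-x ^ 2 / (2 * t))

/-- Tangent-line lower bound for the convex function `u ↦ u * log u`. -/
lemma ulogu_lower (u A : ℝ) (hu : 0 ≤ u) (hA : 0 < A) :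
    u * Real.log A + u - A ≤ u * Real.log u := by
  rcases eq_or_lt_of_le hu with h | h
  · rw [← h]
    simp
    linarith
  · have hd : 0 < A / u := div_pos hA h
    have hlog := Real.log_le_sub_one_of_pos hd
    rw [Real.log_div hA.ne' h.ne'] at hlog
    have h2 := mul_le_mul_of_nonneg_left hlog h.le
    have hAu : u * (A / u) = A := by field_simp
    nlinarith

/-- For a probability density `f` supported on `[-1,1]`, with `p(x,t) = (φ_t * f)(x)` and score
`s(x,t) = (∂_x p(x,t))/p(x,t)` (the spatial derivative being `(φ_t' * f)(x)`), one has
`s(x,t)² ≤ (2/t)·log(1/(√(2πt)·p(x,t)))` for all `x ∈ ℝ` and `t > 0`. -/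
theorem score_upper_bound
    (f : ℝ → ℝ) (hf0 : ∀ x, 0 ≤ f x) (hmeas : Measurable f)
    (hsupp : ∀ x, x ∉ Set.Icc (-1 : ℝ) 1 → f x = 0)
    (hfint : ∫ x, f x = 1)
    (t x : ℝ) (ht : 0 < t) :
    ((∫ μ, (-(x - μ) / t) * gaussDensity t (x - μ) * f μ) /
        (∫ μ, gaussDensity t (x - μ) * f μ)) ^ 2
      ≤ (2 / t) *
        Real.log (1 / (Real.sqrt (2 * Real.pi * t) * ∫ μ, gaussDensity t (x - μ) * f μ)) := by
  have h2t : (0:ℝ) < 2 * t := by linarith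
  have hspos : 0 < Real.sqrt (2 * Real.pi * t) :=
    Real.sqrt_pos.mpr (by positivity)
  set s : ℝ := Real.sqrt (2 * Real.pi * t) with hs
  set q : ℝ → ℝ := fun μ => Real.exp (-(x - μ) ^ 2 / (2 * t)) with hq
  have hq_pos : ∀ μ, 0 < q μ := fun μ => Real.exp_pos _
  have hq_le1 : ∀ μ, q μ ≤ 1 := by
    intro μ
    apply Real.exp_le_one_iff.mpr
    apply div_nonpos_of_nonpos_of_nonneg (neg_nonpos.mpr (sq_nonneg _)) h2t.le
  have hfInt : Integrable f := by
    by_contra hc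
    rw [integral_undef hc] at hfint
    norm_num at hfint
  have hqm : Measurable q := by
    apply Real.measurable_exp.comp
    fun_prop
  -- bound: (x-μ)^2 * q μ ≤ 2t
  have hb2 : ∀ μ, (x - μ) ^ 2 * q μ ≤ 2 * t := by
    intro μ
    set u : ℝ := (x - μ) ^ 2 / (2 * t) with hu
    have hu0 : 0 ≤ u := by positivity
    have h1 : u ≤ Real.exp u := by
      have := Real.add_one_le_exp u; linarith
    have hqe : q μ = Real.exp (-u) := by simp only [hq, hu]; rw [neg_div]
    have hsq : (x - μ) ^ 2 = 2 * t * u := by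
      rw [hu]; field_simp
    have hue : u * Real.exp (-u) ≤ 1 := by
      rw [Real.exp_neg, ← div_eq_mul_inv]
      exact div_le_one_of_le₀ h1 (Real.exp_pos u).le
    calc (x - μ) ^ 2 * q μ = 2 * t * (u * Real.exp (-u)) := by rw [hsq, hqe]; ring
      _ ≤ 2 * t * 1 := by
          apply mul_le_mul_of_nonneg_left hue h2t.le
      _ = 2 * t := by ring
  have hb1 : ∀ μ, |(μ - x) * q μ| ≤ 1 + 2 * t := by
    intro μ
    rw [abs_mul, abs_of_pos (hq_pos μ)]
    rcases le_total |μ - x| 1 with h | h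
    · nlinarith [hq_le1 μ, (hq_pos μ).le, abs_nonneg (μ - x)]
    · have h2 : |μ - x| ≤ (μ - x) ^ 2 := by nlinarith [sq_abs (μ - x)]
      have h3 : (x - μ) ^ 2 * q μ ≤ 2 * t := hb2 μ
      have h4 : (μ - x) ^ 2 = (x - μ) ^ 2 := by ring
      nlinarith [(hq_pos μ).le, abs_nonneg (μ - x)]
  -- integrability of all the pieces
  have int0 : Integrable (fun μ => q μ * f μ) :=
    hfInt.bdd_mul (c := 1) hqm.aestronglyMeasurable
      (Filter.Eventually.of_forall fun μ => by rw [Real.norm_eq_abs, abs_of_pos (hq_pos μ)]; exact hq_le1 μ)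
  have int1 : Integrable (fun μ => (μ - x) * q μ * f μ) := by
    have : Integrable (fun μ => ((μ - x) * q μ) * f μ) :=
      hfInt.bdd_mul (c := 1 + 2 * t) ((measurable_id.sub measurable_const).mul hqm).aestronglyMeasurable
        (Filter.Eventually.of_forall fun μ => by rw [Real.norm_eq_abs]; exact hb1 μ)
    simpa [mul_assoc] using this
  have int2 : Integrable (fun μ => (x - μ) ^ 2 * q μ * f μ) := by
    have : Integrable (fun μ => ((x - μ) ^ 2 * q μ) * f μ) :=
      hfInt.bdd_mul (c := 2 * t) (((measurable_const.sub measurable_id).pow_const 2).mul hqm).aestronglyMeasurable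
        (Filter.Eventually.of_forall fun μ => by
          rw [Real.norm_eq_abs, abs_of_nonneg (by positivity)]; exact hb2 μ)
    simpa [mul_assoc] using this
  set I0 : ℝ := ∫ μ, q μ * f μ with hI0
  set I1 : ℝ := ∫ μ, (μ - x) * q μ * f μ with hI1
  set I2 : ℝ := ∫ μ, (x - μ) ^ 2 * q μ * f μ with hI2
  -- positivity of I0
  have hI0pos : 0 < I0 := by
    set c : ℝ := Real.exp (-(|x| + 1) ^ 2 / (2 * t)) with hc
    have hcpos : 0 < c := Real.exp_pos _
    have hcf : ∀ μ, c * f μ ≤ q μ * f μ := by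
      intro μ
      by_cases hμ : μ ∈ Set.Icc (-1 : ℝ) 1
      · apply mul_le_mul_of_nonneg_right _ (hf0 μ)
        apply Real.exp_le_exp.mpr
        have h1 : |μ| ≤ 1 := abs_le.mpr ⟨hμ.1, hμ.2⟩
        have h2 : |x - μ| ≤ |x| + 1 := (abs_sub x μ).trans (by linarith)
        have hb : (x - μ) ^ 2 ≤ (|x| + 1) ^ 2 := by
          nlinarith [abs_nonneg (x - μ), sq_abs (x - μ), abs_nonneg x]
        rw [div_le_div_iff_of_pos_right h2t]
        linarith
      · rw [hsupp μ hμ]; simp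
    have hmono : c * 1 ≤ I0 := by
      rw [← hfint, ← integral_const_mul]
      exact integral_mono (hfInt.const_mul c) int0 hcf
    linarith
  -- Cauchy–Schwarz step: I1^2 ≤ I2 * I0
  have hCS : I1 ^ 2 ≤ I2 * I0 := by
    set cM : ℝ := I1 / I0 with hcM
    have hpt : ∀ μ, ((μ - x) - cM) ^ 2 * (q μ * f μ)
        = (x - μ) ^ 2 * q μ * f μ - 2 * cM * ((μ - x) * q μ * f μ) + cM ^ 2 * (q μ * f μ) := by
      intro μ; ring
    have hnn : 0 ≤ ∫ μ, ((μ - x) - cM) ^ 2 * (q μ * f μ) :=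
      integral_nonneg fun μ => mul_nonneg (sq_nonneg _)
        (mul_nonneg (hq_pos μ).le (hf0 μ))
    have heq : (∫ μ, ((μ - x) - cM) ^ 2 * (q μ * f μ))
        = I2 - 2 * cM * I1 + cM ^ 2 * I0 := by
      simp_rw [hpt]
      rw [integral_add (by exact (int2.sub (int1.const_mul _))) (int0.const_mul _),
        integral_sub int2 (int1.const_mul _), integral_const_mul, integral_const_mul]
    rw [heq, hcM] at hnn
    have hne : I0 ≠ 0 := hI0pos.ne'
    have e : I2 - 2 * (I1 / I0) * I1 + (I1 / I0) ^ 2 * I0 = I2 - I1 ^ 2 / I0 := by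
      field_simp
      ring
    rw [e] at hnn
    have h' : I1 ^ 2 / I0 ≤ I2 := by linarith
    calc I1 ^ 2 = I1 ^ 2 / I0 * I0 := by field_simp
      _ ≤ I2 * I0 := mul_le_mul_of_nonneg_right h' hI0pos.le
  -- entropy step: I2 ≤ -2t * I0 * log I0
  have hlogq : ∀ μ, q μ * Real.log (q μ) * f μ
      = -(2 * t)⁻¹ * ((x - μ) ^ 2 * q μ * f μ) := by
    intro μ
    rw [hq]
    simp only [Real.log_exp]
    ring
  have intRHS : Integrable (fun μ => q μ * Real.log (q μ) * f μ) := by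
    simp_rw [hlogq]
    exact int2.const_mul _
  have hptJ : ∀ μ, (q μ * Real.log I0 + q μ - I0) * f μ ≤ q μ * Real.log (q μ) * f μ :=
    fun μ => mul_le_mul_of_nonneg_right (ulogu_lower (q μ) I0 (hq_pos μ).le hI0pos) (hf0 μ)
  have intLHS : Integrable (fun μ => (q μ * Real.log I0 + q μ - I0) * f μ) := by
    have hpt2 : ∀ μ, (q μ * Real.log I0 + q μ - I0) * f μ
        = Real.log I0 * (q μ * f μ) + q μ * f μ - I0 * f μ := by intro μ; ring
    simp_rw [hpt2]
    exact ((int0.const_mul _).add int0).sub (hfInt.const_mul _)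
  have hJ : I0 * Real.log I0 ≤ -(2 * t)⁻¹ * I2 := by
    have h := integral_mono intLHS intRHS hptJ
    have hL : (∫ μ, (q μ * Real.log I0 + q μ - I0) * f μ) = I0 * Real.log I0 := by
      have hpt2 : ∀ μ, (q μ * Real.log I0 + q μ - I0) * f μ
          = Real.log I0 * (q μ * f μ) + q μ * f μ - I0 * f μ := by intro μ; ring
      simp_rw [hpt2]
      have intA : Integrable (fun μ => Real.log I0 * (q μ * f μ) + q μ * f μ) :=
        (int0.const_mul (Real.log I0)).add int0
      rw [integral_sub intA (hfInt.const_mul I0),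
        integral_add (int0.const_mul (Real.log I0)) int0, integral_const_mul,
        integral_const_mul, hfint]
      ring
    have hR : (∫ μ, q μ * Real.log (q μ) * f μ) = -(2 * t)⁻¹ * I2 := by
      simp_rw [hlogq]
      rw [integral_const_mul]
    rw [hL, hR] at h
    exact h
  have hEnt : I2 ≤ -(2 * t) * I0 * Real.log I0 := by
    have := mul_le_mul_of_nonneg_left hJ h2t.le
    have e : 2 * t * (-(2 * t)⁻¹ * I2) = -I2 := by
      field_simp
    nlinarith
  -- combine
  have hkey : I1 ^ 2 ≤ -(2 * t) * I0 ^ 2 * Real.log I0 := by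
    have h2 : I2 * I0 ≤ (-(2 * t) * I0 * Real.log I0) * I0 :=
      mul_le_mul_of_nonneg_right hEnt hI0pos.le
    nlinarith
  -- rewrite the goal
  have e0 : (∫ μ, gaussDensity t (x - μ) * f μ) = s⁻¹ * I0 := by
    rw [hI0, ← integral_const_mul]
    congr 1; funext μ
    simp only [gaussDensity, hq, ← hs]
    ring
  have e1 : (∫ μ, (-(x - μ) / t) * gaussDensity t (x - μ) * f μ) = s⁻¹ * t⁻¹ * I1 := by
    rw [hI1, ← integral_const_mul]
    congr 1; funext μ
    simp only [gaussDensity, hq, ← hs]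
    ring
  rw [e0, e1]
  have hsI : s * (s⁻¹ * I0) = I0 := by
    field_simp
  rw [hsI]
  have hdiv : s⁻¹ * t⁻¹ * I1 / (s⁻¹ * I0) = I1 / (t * I0) := by
    field_simp
  rw [hdiv, one_div, Real.log_inv, div_pow, div_le_iff₀ (by positivity)]
  have efin : 2 / t * -Real.log I0 * (t * I0) ^ 2 = -(2 * t) * I0 ^ 2 * Real.log I0 := by
    field_simp
  rw [efin]
  exact hkey
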